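/- Let (A, V, γ, res, tr) be a Q-Mackey functor, let W = V / im(res) be the cokernel of res with projection π : V → W, and let Ṽ be the sign twist of V (same abelian group, involution −γ). Then: (a) π(v + γv) = 0 for all v ∈ V, so π((−γ)v) = π(v); (b) there is a unique additive map r : W → V satisfying r(π v) = v − γv for all v ∈ V (well-definedness follows since (1−γ)(im res) = 0); (c) γ(r w) = −r(w) for all w ∈ W. In particular, the data (W, Ṽ, γ̃ = −γ, restriction r, transfer π) satisfies all the Q-Mackey functor axioms: r(π v) = v + γ̃v, π(γ̃ v) = π(v), and γ̃(r w) = r(w). -/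
import Mathlib


/-!
A `Q`-Mackey functor (for `Q` the cyclic group of order two with nontrivial element `γ`)
is given by abelian groups `A` (the `Q/Q`-level) and `V` (the `Q/e`-level), an additive
involution `γ` on `V`, and additive maps `res : A → V`, `tr : V → A` satisfying
`res (tr v) = v + γ v`, `tr (γ v) = tr v` and `γ (res a) = res a`.
-/

/-- With `W = V / im res` the cokernel of `res` and `π` the projection, and with the sign
twist of `V` carrying the involution `-γ`: (a) `π (v + γ v) = 0`, so `π (-(γ v)) = π v`;
(b) there is a unique additive map `r : W → V` with `r (π v) = v - γ v`;
(c) `γ (r w) = -(r w)`. In particular `(W, Ṽ, -γ, r, π)` satisfies all the `Q`-Mackey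
functor axioms: `r (π v) = v + (-γ) v`, `π ((-γ) v) = π v` and `(-γ) (r w) = r w`. -/
theorem stmt11 {A V : Type*} [AddCommGroup A] [AddCommGroup V]
    (γ : V →+ V) (res : A →+ V) (tr : V →+ A)
    (hγγ : ∀ v, γ (γ v) = v)
    (hrestr : ∀ v, res (tr v) = v + γ v)
    (htrγ : ∀ v, tr (γ v) = tr v)
    (hγres : ∀ a, γ (res a) = res a) :
    (∀ v, QuotientAddGroup.mk' res.range (v + γ v) = 0) ∧
    (∀ v, QuotientAddGroup.mk' res.range (-(γ v)) = QuotientAddGroup.mk' res.range v) ∧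
    (∃! r : (V ⧸ res.range) →+ V,
      ∀ v, r (QuotientAddGroup.mk' res.range v) = v - γ v) ∧
    (∀ r : (V ⧸ res.range) →+ V,
      (∀ v, r (QuotientAddGroup.mk' res.range v) = v - γ v) →
      (∀ w, γ (r w) = -(r w)) ∧
      (∀ v, r (QuotientAddGroup.mk' res.range v) = v + (-(γ v))) ∧
      (∀ v, QuotientAddGroup.mk' res.range (-(γ v)) = QuotientAddGroup.mk' res.range v) ∧
      (∀ w, -(γ (r w)) = r w)) := by

  -- (a)
  have ha : ∀ v, QuotientAddGroup.mk' res.range (v + γ v) = 0 := by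
    intro v
    rw [QuotientAddGroup.mk'_apply, QuotientAddGroup.eq_zero_iff]
    exact ⟨tr v, hrestr v⟩
  have hb : ∀ v, QuotientAddGroup.mk' res.range (-(γ v)) = QuotientAddGroup.mk' res.range v := by
    intro v
    have := ha v
    rw [map_add] at this
    have h : QuotientAddGroup.mk' res.range (γ v) = - QuotientAddGroup.mk' res.range v := by
      linear_combination (norm := abel) this
    rw [map_neg, h, neg_neg]
  -- construct r
  have hker : ∀ v ∈ res.range, ((AddMonoidHom.id V) - γ) v = 0 := by
    rintro v ⟨a, rfl⟩
    simp [hγres a]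
  refine ⟨ha, hb, ⟨QuotientAddGroup.lift res.range ((AddMonoidHom.id V) - γ) hker,
    fun v => rfl, ?_⟩, ?_⟩
  · intro r hr
    ext v
    exact hr v
  · intro r hr
    have hc : ∀ w, γ (r w) = -(r w) := by
      intro w
      induction w using QuotientAddGroup.induction_on with
      | H v =>
        rw [← QuotientAddGroup.mk'_apply, hr v, map_sub, hγγ v]
        abel
    exact ⟨hc, fun v => by rw [hr v]; abel, hb, fun w => by rw [hc w, neg_neg]⟩
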